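/- If φ : ℝ → ℝ is odd with φ(0) = 0 and is continuous and satisfies φ(γa) = −φ(γb) for all γ ∈ ℝ for some a ≠ ±b with φ(a) ≠ 0, then a contradiction follows; equivalently, a continuous function cannot satisfy the 'self-similar alternating' condition with nonzero value. -/

import Mathlib

lemma aux_no_self_similar (φ : ℝ → ℝ) (hcont : Continuous φ) (h0 : φ 0 = 0)
    (a b : ℝ) (hba : |b| < |a|)
    (h3 : ∀ γ : ℝ, φ (γ * a) = -φ (γ * b)) : φ a = 0 := by
  have ha : a ≠ 0 := by
    intro h; rw [h, abs_zero] at hba; exact absurd hba (not_lt.mpr (abs_nonneg b))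
  set r : ℝ := b / a with hr
  have hrabs : |r| < 1 := by
    rw [hr, abs_div]
    exact (div_lt_one (lt_of_le_of_lt (abs_nonneg b) hba)).mpr hba
  have key : ∀ n : ℕ, |φ (r ^ n * a)| = |φ a| := by
    intro n
    induction n with
    | zero => simp
    | succ n ih =>
      have h := h3 (r ^ n)
      have hrb : r ^ n * b = r ^ (n + 1) * a := by
        rw [pow_succ, mul_assoc, hr, div_mul_cancel₀ b ha]
      rw [hrb] at h
      rw [← ih, h, abs_neg]
  have hlim : Filter.Tendsto (fun n : ℕ => r ^ n * a) Filter.atTop (nhds 0) := by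
    have := tendsto_pow_atTop_nhds_zero_of_abs_lt_one hrabs
    simpa using this.mul_const a
  have hlim2 : Filter.Tendsto (fun n : ℕ => |φ (r ^ n * a)|) Filter.atTop (nhds 0) := by
    have := (continuous_abs.comp hcont).continuousAt.tendsto.comp hlim
    simpa [h0, Function.comp_def] using this
  have : Filter.Tendsto (fun _ : ℕ => |φ a|) Filter.atTop (nhds 0) := by
    simpa only [key] using hlim2
  have := tendsto_nhds_unique this tendsto_const_nhds
  exact abs_eq_zero.mp this.symm

/-- A continuous odd function cannot satisfy the self-similar alternating
condition φ(γa) = -φ(γb) (a ≠ ±b) with nonzero value φ(a) ≠ 0. -/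
theorem no_continuous_self_similar (φ : ℝ → ℝ)
    (hcont : Continuous φ)
    (hodd : ∀ t : ℝ, φ (-t) = -φ t) (h0 : φ 0 = 0)
    (a b : ℝ) (hab : a ≠ b) (hab' : a ≠ -b)
    (h3 : ∀ γ : ℝ, φ (γ * a) = -φ (γ * b))
    (h2 : φ a ≠ 0) :
    False := by
  have habs : |a| ≠ |b| := by
    intro h
    rcases abs_eq_abs.mp h with h' | h'
    · exact hab h'
    · exact hab' h'
  rcases lt_or_gt_of_ne habs with h | h
  · -- |a| < |b| : apply aux with roles swapped
    have h3' : ∀ γ : ℝ, φ (γ * b) = -φ (γ * a) := by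
      intro γ; rw [h3 γ, neg_neg]
    have hb0 : φ b = 0 := aux_no_self_similar φ hcont h0 b a h h3'
    have := h3 1
    simp [hb0] at this
    exact h2 this
  · exact h2 (aux_no_self_similar φ hcont h0 a b h h3)
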